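/- Let d ≥ 2, 0 < ρ < 1, 0 < π_0 ≤ 1, and λ = ρ (mean job size 1, exponential). Define H̄(w) = π_0^{1/d} F̄(w) where F̄(w) = (ρπ_0 + (ρ^{1−d} − ρπ_0)e^{(d−1)w})^{1/(1−d)}. Then H̄ equals the closed form ((ρπ_0^{1/d}) + ((ρπ_0^{1/d})^{1−d} − ρπ_0^{1/d}) e^{(d−1)w})^{1/(1−d)}, i.e., the equilibrium workload ccdf of LL(d) without memory at load ρπ_0^{1/d}. -/

import Mathlib

/-- π_0^{1/d} F̄(w) equals the no-memory LL(d) workload ccdf at load ρπ_0^{1/d}. -/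
theorem stmt8 (d : ℕ) (hd : 2 ≤ d) (ρ π0 : ℝ) (hρ : 0 < ρ) (hρ1 : ρ < 1)
    (hπ0 : 0 < π0) (hπ1 : π0 ≤ 1)
    (F : ℝ → ℝ)
    (hF : ∀ w, F w = (ρ * π0 + (ρ ^ ((1:ℝ) - (d:ℝ)) - ρ * π0) *
      Real.exp (((d:ℝ) - 1) * w)) ^ ((1:ℝ) / (1 - (d:ℝ)))) :
    ∀ w : ℝ, 0 ≤ w →
      π0 ^ ((1:ℝ) / d) * F w =
        (ρ * π0 ^ ((1:ℝ) / d) +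
          ((ρ * π0 ^ ((1:ℝ) / d)) ^ ((1:ℝ) - (d:ℝ)) - ρ * π0 ^ ((1:ℝ) / d)) *
            Real.exp (((d:ℝ) - 1) * w)) ^ ((1:ℝ) / (1 - (d:ℝ))) := by
  intro w hw
  have hd2 : (2:ℝ) ≤ (d:ℝ) := by exact_mod_cast hd
  have hd1 : (1:ℝ) - (d:ℝ) ≠ 0 := by linarith
  have hdne : (d:ℝ) ≠ 0 := by linarith
  have hepos : (0:ℝ) < Real.exp (((d:ℝ) - 1) * w) := Real.exp_pos _
  have he1 : (1:ℝ) ≤ Real.exp (((d:ℝ) - 1) * w) :=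
    Real.one_le_exp (by nlinarith)
  have hρ1d : 1 < ρ ^ ((1:ℝ) - (d:ℝ)) := by
    rw [show (1:ℝ) - (d:ℝ) = -((d:ℝ) - 1) by ring, Real.rpow_neg hρ.le]
    have h1 : ρ ^ ((d:ℝ) - 1) < 1 := Real.rpow_lt_one hρ.le hρ1 (by linarith)
    have h2 : 0 < ρ ^ ((d:ℝ) - 1) := Real.rpow_pos_of_pos hρ _
    exact (one_lt_inv_iff₀).2 ⟨h2, h1⟩
  have hρπ : ρ * π0 < 1 := by nlinarith
  have hinner : 0 < ρ * π0 + (ρ ^ ((1:ℝ) - (d:ℝ)) - ρ * π0) *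
      Real.exp (((d:ℝ) - 1) * w) := by nlinarith
  have hpownn : (0:ℝ) ≤ π0 ^ (((1:ℝ) - (d:ℝ)) / d) :=
    (Real.rpow_pos_of_pos hπ0 _).le
  have key : π0 ^ ((1:ℝ) / d) =
      (π0 ^ (((1:ℝ) - (d:ℝ)) / d)) ^ ((1:ℝ) / (1 - (d:ℝ))) := by
    rw [← Real.rpow_mul hπ0.le]
    congr 1
    field_simp
  rw [hF]
  conv_lhs => rw [key]
  rw [← Real.mul_rpow hpownn hinner.le]
  congr 1
  have e1 : π0 ^ (((1:ℝ) - (d:ℝ)) / d) * π0 = π0 ^ ((1:ℝ) / d) := by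
    nth_rewrite 2 [← Real.rpow_one π0]
    rw [← Real.rpow_add hπ0]
    congr 1
    field_simp
    ring
  have e2 : (ρ * π0 ^ ((1:ℝ) / d)) ^ ((1:ℝ) - (d:ℝ)) =
      ρ ^ ((1:ℝ) - (d:ℝ)) * π0 ^ (((1:ℝ) - (d:ℝ)) / d) := by
    rw [Real.mul_rpow hρ.le (Real.rpow_pos_of_pos hπ0 _).le,
      ← Real.rpow_mul hπ0.le]
    congr 1
    field_simp
  rw [e2]
  linear_combination (ρ - ρ * Real.exp (((d:ℝ) - 1) * w)) * e1
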